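/- Let X = (X_1,...,X_n) and Y = (Y_1,...,Y_n) be vectors of independent Bernoulli random variables with success probabilities p_i and q_i respectively, 0 < p_i ≤ q_i < 1. If all the quantities β_i = (p_i/(1-p_i))·((1-q_i)/q_i) are equal, then for every k ∈ {0,...,n}, the conditional law of X given ∑X_i ≥ k is stochastically dominated by the conditional law of Y given ∑Y_i ≥ k. -/

import Mathlib

open Finset
open scoped BigOperators Classical

noncomputable section

/-- Weight (probability) of a configuration `x` of `n` independent Bernoulli
variables with success probabilities `p i`. -/
def bw {n : ℕ} (p : Fin n → ℝ) (x : Fin n → Bool) : ℝ :=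
  ∏ i, if x i then p i else 1 - p i

/-- Probability of the event `A` for `n` independent Bernoulli variables. -/
def bpr {n : ℕ} (p : Fin n → ℝ) (A : (Fin n → Bool) → Prop) : ℝ :=
  ∑ x : Fin n → Bool, if A x then bw p x else 0

/-- Number of successes in the configuration `x`. -/
def cnt {n : ℕ} (x : Fin n → Bool) : ℕ := ∑ i, if x i then 1 else 0

/-- Conditional probability mass function given the event `A`. -/
def condPMF {n : ℕ} (p : Fin n → ℝ) (A : (Fin n → Bool) → Prop)
    (x : Fin n → Bool) : ℝ :=
  (if A x then bw p x else 0) / bpr p A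

/-- `dominates μ ν` : the law `μ` on `{0,1}^n` is stochastically dominated by `ν`,
i.e. there is a coupling supported on ordered pairs. -/
def dominates {n : ℕ} (μ ν : (Fin n → Bool) → ℝ) : Prop :=
  ∃ c : (Fin n → Bool) → (Fin n → Bool) → ℝ,
    (∀ x y, 0 ≤ c x y) ∧
    (∀ x, ∑ y : Fin n → Bool, c x y = μ x) ∧
    (∀ y, ∑ x : Fin n → Bool, c x y = ν y) ∧
    (∀ x y, c x y ≠ 0 → x ≤ y)

namespace S4

/-- product of weights over occupied sites -/
def wv {n : ℕ} (w : Fin n → ℝ) (x : Fin n → Bool) : ℝ := ∏ i, if x i then w i else 1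

/-- unnormalized level measure -/
def lev {n : ℕ} (w : Fin n → ℝ) (m : ℕ) (x : Fin n → Bool) : ℝ :=
  if cnt x = m then wv w x else 0

/-- mass of level m -/
def Es (n : ℕ) (w : Fin n → ℝ) (m : ℕ) : ℝ := ∑ x : Fin n → Bool, lev w m x

variable {n : ℕ}

lemma wv_pos {w : Fin n → ℝ} (hw : ∀ i, 0 < w i) (x : Fin n → Bool) : 0 < wv w x := by
  apply Finset.prod_pos; intro i _; split
  · exact hw i
  · norm_num

lemma wv_nonneg {w : Fin n → ℝ} (hw : ∀ i, 0 < w i) (x : Fin n → Bool) : 0 ≤ wv w x :=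
  (wv_pos hw x).le

lemma lev_nonneg {w : Fin n → ℝ} (hw : ∀ i, 0 < w i) (m : ℕ) (x : Fin n → Bool) :
    0 ≤ lev w m x := by
  unfold lev; split
  · exact wv_nonneg hw x
  · exact le_rfl

lemma cnt_le (x : Fin n → Bool) : cnt x ≤ n := by
  unfold cnt
  calc (∑ i, if x i then 1 else 0) ≤ ∑ _i : Fin n, 1 := by
        apply Finset.sum_le_sum; intro i _; split <;> omega
    _ = n := by simp

lemma cnt_cons (b : Bool) (y : Fin n → Bool) :
    cnt (Fin.cons b y) = (if b then 1 else 0) + cnt y := by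
  unfold cnt
  rw [Fin.sum_univ_succ]
  simp

lemma wv_cons (w : Fin (n+1) → ℝ) (b : Bool) (y : Fin n → Bool) :
    wv w (Fin.cons b y) = (if b then w 0 else 1) * wv (fun i => w i.succ) y := by
  unfold wv
  rw [Fin.prod_univ_succ]
  simp

lemma cnt_cons_true (y : Fin n → Bool) : cnt (Fin.cons true y) = cnt y + 1 := by
  rw [cnt_cons]; simp [Nat.add_comm]

lemma cnt_cons_false (y : Fin n → Bool) : cnt (Fin.cons false y) = cnt y := by
  rw [cnt_cons]; simp

lemma wv_cons_true (w : Fin (n+1) → ℝ) (y : Fin n → Bool) :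
    wv w (Fin.cons true y) = w 0 * wv (fun i => w i.succ) y := by
  rw [wv_cons]; simp

lemma wv_cons_false (w : Fin (n+1) → ℝ) (y : Fin n → Bool) :
    wv w (Fin.cons false y) = wv (fun i => w i.succ) y := by
  rw [wv_cons]; simp

lemma sum_split (f : (Fin (n+1) → Bool) → ℝ) :
    ∑ x : Fin (n+1) → Bool, f x
      = (∑ y : Fin n → Bool, f (Fin.cons true y)) + ∑ y : Fin n → Bool, f (Fin.cons false y) := by
  rw [← Equiv.sum_comp (Fin.consEquiv (fun _ => Bool)) f]
  rw [Fintype.sum_prod_type]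
  rw [Fintype.sum_bool]
  rfl

lemma Es_nonneg {w : Fin n → ℝ} (hw : ∀ i, 0 < w i) (m : ℕ) : 0 ≤ Es n w m :=
  Finset.sum_nonneg fun x _ => lev_nonneg hw m x

lemma Es_zero_of_gt {w : Fin n → ℝ} {m : ℕ} (h : n < m) : Es n w m = 0 := by
  unfold Es
  apply Finset.sum_eq_zero; intro x _
  unfold lev
  have := cnt_le x
  rw [if_neg (by omega)]

lemma lev_zero_of_gt {w : Fin n → ℝ} {m : ℕ} (h : n < m) (x : Fin n → Bool) :
    lev w m x = 0 := by
  unfold lev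
  have := cnt_le x
  rw [if_neg (by omega)]

lemma Es_succ_zero (w : Fin (n+1) → ℝ) :
    Es (n+1) w 0 = Es n (fun i => w i.succ) 0 := by
  unfold Es
  rw [sum_split]
  have h1 : ∀ y : Fin n → Bool, lev w 0 (Fin.cons true y) = 0 := by
    intro y; unfold lev; rw [cnt_cons_true]; simp
  have h2 : ∀ y : Fin n → Bool, lev w 0 (Fin.cons false y) = lev (fun i => w i.succ) 0 y := by
    intro y; unfold lev; rw [cnt_cons_false, wv_cons_false]
  simp only [h1, h2]
  simp

lemma Es_succ (w : Fin (n+1) → ℝ) (m : ℕ) :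
    Es (n+1) w (m+1)
      = Es n (fun i => w i.succ) (m+1) + w 0 * Es n (fun i => w i.succ) m := by
  unfold Es
  rw [sum_split]
  have h1 : ∀ y : Fin n → Bool,
      lev w (m+1) (Fin.cons true y) = w 0 * lev (fun i => w i.succ) m y := by
    intro y; unfold lev; rw [cnt_cons_true, wv_cons_true]
    by_cases h : cnt y = m
    · rw [if_pos (by omega), if_pos h]
    · rw [if_neg (by omega), if_neg h]; simp
  have h2 : ∀ y : Fin n → Bool,
      lev w (m+1) (Fin.cons false y) = lev (fun i => w i.succ) (m+1) y := by
    intro y; unfold lev; rw [cnt_cons_false, wv_cons_false]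
  simp only [h1, h2, Finset.mul_sum]
  ring

lemma Es_pos : ∀ (n : ℕ) (w : Fin n → ℝ), (∀ i, 0 < w i) → ∀ m : ℕ, m ≤ n → 0 < Es n w m := by
  intro n
  induction n with
  | zero =>
    intro w hw m hm
    interval_cases m
    have hc : ∀ x : Fin 0 → Bool, cnt x = 0 := fun x => by simp [cnt]
    have hwv : ∀ x : Fin 0 → Bool, wv w x = 1 := fun x => by simp [wv]
    simp [Es, lev, hc, hwv]
  | succ n ih =>
    intro w hw m hm
    have hw' : ∀ i : Fin n, 0 < (fun i => w i.succ) i := fun i => hw i.succ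
    cases m with
    | zero => rw [Es_succ_zero]; exact ih _ hw' 0 (Nat.zero_le n)
    | succ m =>
      rw [Es_succ]
      have h1 : 0 ≤ Es n (fun i => w i.succ) (m+1) := Es_nonneg hw' _
      have h2 : 0 < w 0 * Es n (fun i => w i.succ) m :=
        mul_pos (hw 0) (ih _ hw' m (by omega))
      linarith

/-- Newton's inequality / log-concavity of level masses. -/
lemma newton : ∀ (n : ℕ) (w : Fin n → ℝ), (∀ i, 0 < w i) → ∀ m : ℕ,
    Es n w m * Es n w (m+2) ≤ Es n w (m+1) ^ 2 := by
  intro n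
  induction n with
  | zero =>
    intro w hw m
    rw [show Es 0 w (m+2) = 0 from Es_zero_of_gt (by omega), mul_zero]
    exact sq_nonneg _
  | succ n ih =>
    intro w hw m
    set w' : Fin n → ℝ := fun i => w i.succ with hw'def
    have hw' : ∀ i : Fin n, 0 < w' i := fun i => hw i.succ
    have hu : 0 < w 0 := hw 0
    have hA : ∀ j, 0 ≤ Es n w' j := fun j => Es_nonneg hw' j
    -- two-step lemma
    have twostep : ∀ j : ℕ, Es n w' j * Es n w' (j+3) ≤ Es n w' (j+1) * Es n w' (j+2) := by
      intro j
      by_cases hj : n < j + 3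
      · rw [Es_zero_of_gt hj, mul_zero]
        exact mul_nonneg (hA _) (hA _)
      · push_neg at hj
        have p1 : 0 < Es n w' (j+1) := Es_pos n w' hw' (j+1) (by omega)
        have p2 : 0 < Es n w' (j+2) := Es_pos n w' hw' (j+2) (by omega)
        have i1 := ih w' hw' j
        have i2 := ih w' hw' (j+1)
        have key := mul_le_mul i1 i2 (mul_nonneg (hA (j+1)) (hA (j+3))) (sq_nonneg _)
        nlinarith [key, mul_pos p1 p2, hA j, hA (j+3)]
    cases m with
    | zero =>
      rw [Es_succ_zero, Es_succ, Es_succ, ← hw'def]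
      have i1 := ih w' hw' 0
      nlinarith [i1, mul_nonneg (mul_nonneg hu.le (hA 0)) (hA 1),
        mul_nonneg (mul_nonneg (mul_nonneg hu.le hu.le) (hA 0)) (hA 0)]
    | succ m =>
      rw [Es_succ, Es_succ, Es_succ, ← hw'def]
      have i1 := ih w' hw' m
      have i2 := ih w' hw' (m+1)
      have ts := twostep m
      nlinarith [i2, mul_le_mul_of_nonneg_left ts hu.le,
        mul_le_mul_of_nonneg_left i1 (mul_nonneg hu.le hu.le)]

/-- lev of a true-cons at level m, via a guarded predecessor level. -/
lemma lev_cons_true_level (w : Fin (n+1) → ℝ) (m : ℕ) (x : Fin n → Bool) :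
    lev w m (Fin.cons true x)
      = w 0 * (if h : m = 0 then 0 else lev (fun i => w i.succ) (m-1) x) := by
  unfold lev
  rw [cnt_cons_true, wv_cons_true]
  rcases m with _ | j
  · simp
  · simp only [Nat.add_one_sub_one, dif_neg (Nat.succ_ne_zero j)]
    by_cases h : cnt x = j
    · rw [if_pos (by omega), if_pos h]
    · rw [if_neg (by omega), if_neg h, mul_zero]

lemma lev_cons_false_level (w : Fin (n+1) → ℝ) (m : ℕ) (x : Fin n → Bool) :
    lev w m (Fin.cons false x) = lev (fun i => w i.succ) m x := by
  unfold lev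
  rw [cnt_cons_false, wv_cons_false]

/-- The key coupling between adjacent levels (unnormalized). -/
lemma levDom : ∀ (n : ℕ) (w : Fin n → ℝ), (∀ i, 0 < w i) → ∀ (m : ℕ),
    ∃ c : (Fin n → Bool) → (Fin n → Bool) → ℝ,
      (∀ x y, 0 ≤ c x y) ∧
      (∀ x, ∑ y : Fin n → Bool, c x y = Es n w (m+1) * lev w m x) ∧
      (∀ y, ∑ x : Fin n → Bool, c x y = Es n w m * lev w (m+1) y) ∧
      (∀ x y, c x y ≠ 0 → x ≤ y) := by
  intro N
  induction N with
  | zero =>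
    intro w hw m
    refine ⟨fun _ _ => 0, fun _ _ => le_rfl, ?_, ?_, by intro x y h; exact absurd rfl h⟩
    · intro x
      rw [show Es 0 w (m+1) = 0 from Es_zero_of_gt (by omega), zero_mul]
      simp
    · intro y
      rw [lev_zero_of_gt (by omega), mul_zero]
      simp
  | succ n ih =>
    intro w hw m
    by_cases hmn : n + 1 ≤ m
    · -- degenerate : both sides vanish
      refine ⟨fun _ _ => 0, fun _ _ => le_rfl, ?_, ?_, by intro x y h; exact absurd rfl h⟩
      · intro x
        rw [show Es (n+1) w (m+1) = 0 from Es_zero_of_gt (by omega), zero_mul]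
        simp
      · intro y
        rw [lev_zero_of_gt (by omega), mul_zero]
        simp
    push_neg at hmn
    have hm : m ≤ n := by omega
    set u := w 0 with hu_def
    have hu : 0 < u := hw 0
    set w' : Fin n → ℝ := fun i => w i.succ with hw'_def
    have hw' : ∀ i, 0 < w' i := fun i => hw i.succ
    set A : ℕ → ℝ := Es n w' with hA_def
    set L : ℕ → (Fin n → Bool) → ℝ := lev w' with hL_def
    have hAnn : ∀ j, 0 ≤ A j := fun j => Es_nonneg hw' j
    have hAm : 0 < A m := Es_pos n w' hw' m hm
    -- guarded predecessor data
    set Ap : ℝ := if m = 0 then 0 else A (m-1) with hAp_def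
    set Lp : (Fin n → Bool) → ℝ := fun x => if m = 0 then 0 else L (m-1) x with hLp_def
    have hApnn : 0 ≤ Ap := by
      rw [hAp_def]; split
      · exact le_rfl
      · exact hAnn _
    -- recursion identities
    have f1 : Es (n+1) w m = A m + u * Ap := by
      rcases m with _ | j
      · rw [Es_succ_zero]
        simp [hAp_def, hA_def, hw'_def]
      · rw [Es_succ]
        simp [hAp_def, hA_def, hw'_def, hu_def]
    have f5 : Es (n+1) w (m+1) = A (m+1) + u * A m := by
      rw [Es_succ]
    -- Newton consequence
    have f4 : A (m+1) * Ap ≤ A m * A m := by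
      rcases m with _ | j
      · simp [hAp_def]
        exact mul_nonneg (hAnn 1) le_rfl |>.trans (by nlinarith [hAm])
      · have := newton n w' hw' j
        simp only [hAp_def, Nat.add_one_sub_one, if_neg (Nat.succ_ne_zero j)]
        nlinarith [this]
    -- lev decompositions
    have g1 : ∀ x, lev w m (Fin.cons true x) = u * Lp x := by
      intro x
      rw [lev_cons_true_level]
      rcases m with _ | j <;> simp [hLp_def, hL_def, hw'_def, hu_def]
    have g2 : ∀ x, lev w m (Fin.cons false x) = L m x := by
      intro x; rw [lev_cons_false_level]
    have g3 : ∀ x, lev w (m+1) (Fin.cons true x) = u * L m x := by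
      intro x
      rw [lev_cons_true_level]
      simp [hL_def, hw'_def, hu_def]
    have g4 : ∀ x, lev w (m+1) (Fin.cons false x) = L (m+1) x := by
      intro x; rw [lev_cons_false_level]
    -- inner couplings
    obtain ⟨c₂, hc₂0, hc₂r, hc₂c, hc₂s⟩ := ih w' hw' m
    have hc1 : ∃ c₁ : (Fin n → Bool) → (Fin n → Bool) → ℝ,
        (∀ x y, 0 ≤ c₁ x y) ∧
        (∀ x, ∑ y : Fin n → Bool, c₁ x y = A m * Lp x) ∧
        (∀ y, ∑ x : Fin n → Bool, c₁ x y = Ap * L m y) ∧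
        (∀ x y, c₁ x y ≠ 0 → x ≤ y) := by
      rcases m with _ | j
      · refine ⟨fun _ _ => 0, fun x y => le_rfl, ?_, ?_, by intro x y h; exact absurd rfl h⟩
        · intro x; simp [hLp_def]
        · intro y; simp [hAp_def]
      · obtain ⟨c₁, h0, hr, hc, hs⟩ := ih w' hw' j
        refine ⟨c₁, h0, ?_, ?_, hs⟩
        · intro x; rw [hr]
          simp [hLp_def, hL_def, hA_def]
        · intro y; rw [hc]
          simp [hAp_def, hA_def, hL_def]
    obtain ⟨c₁, hc₁0, hc₁r, hc₁c, hc₁s⟩ := hc1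
    -- scalars
    set E := Es (n+1) w with hE_def
    set lam1 : ℝ := u * E (m+1) / A m with hlam1
    set lam2 : ℝ := u * (E m * A m - E (m+1) * Ap) / A m with hlam2
    set lam3 : ℝ := E m / A m with hlam3
    have hEnn : ∀ j, 0 ≤ E j := fun j => Es_nonneg hw j
    have hlam1nn : 0 ≤ lam1 := by
      apply div_nonneg (mul_nonneg hu.le (hEnn _)) hAm.le
    have hlam2nn : 0 ≤ lam2 := by
      apply div_nonneg _ hAm.le
      apply mul_nonneg hu.le
      have : E m * A m - E (m+1) * Ap = A m * A m - A (m+1) * Ap := by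
        rw [f1, f5]; ring
      rw [this]; linarith [f4]
    have hlam3nn : 0 ≤ lam3 := div_nonneg (hEnn _) hAm.le
    -- the coupling
    refine ⟨fun x' y' =>
      if x' 0 then (if y' 0 then lam1 * c₁ (Fin.tail x') (Fin.tail y') else 0)
      else (if y' 0 then lam2 * (if Fin.tail x' = Fin.tail y' then L m (Fin.tail x') else 0)
            else lam3 * c₂ (Fin.tail x') (Fin.tail y')), ?_, ?_, ?_, ?_⟩
    · -- nonneg
      intro x y
      dsimp only
      split
      · split
        · exact mul_nonneg hlam1nn (hc₁0 _ _)
        · exact le_rfl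
      · split
        · apply mul_nonneg hlam2nn
          split
          · exact lev_nonneg hw' m _
          · exact le_rfl
        · exact mul_nonneg hlam3nn (hc₂0 _ _)
    · -- rows
      intro x'
      dsimp only
      rw [sum_split]
      rcases hb : x' 0 with _ | _
      · -- x' 0 = false
        have hx : lev w m x' = L m (Fin.tail x') := by
          conv_lhs => rw [← Fin.cons_self_tail x', hb]
          rw [g2]
        simp only [hb, Fin.cons_zero, Fin.tail_cons, Bool.false_eq_true, if_false, if_true]
        rw [← Finset.mul_sum, ← Finset.mul_sum, hc₂r,
          Finset.sum_ite_eq Finset.univ (Fin.tail x') (fun _ => L m (Fin.tail x')),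
          if_pos (Finset.mem_univ _)]
        have key : lam2 + lam3 * A (m+1) = E (m+1) := by
          rw [hlam2, hlam3, f1, f5]
          field_simp
          ring
        rw [hx]
        linear_combination (L m (Fin.tail x')) * key
      · -- x' 0 = true
        have hx : lev w m x' = u * Lp (Fin.tail x') := by
          conv_lhs => rw [← Fin.cons_self_tail x', hb]
          rw [g1]
        simp only [hb, Fin.cons_zero, Fin.tail_cons, Bool.false_eq_true, if_false, if_true]
        rw [← Finset.mul_sum, hc₁r, Finset.sum_const_zero, add_zero]
        have key : lam1 * A m = u * E (m+1) := by
          rw [hlam1]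
          field_simp
        rw [hx]
        linear_combination (Lp (Fin.tail x')) * key
    · -- cols
      intro y'
      dsimp only
      rw [sum_split]
      rcases hb : y' 0 with _ | _
      · -- y' 0 = false
        have hy : lev w (m+1) y' = L (m+1) (Fin.tail y') := by
          conv_lhs => rw [← Fin.cons_self_tail y', hb]
          rw [g4]
        simp only [hb, Fin.cons_zero, Fin.tail_cons, Bool.false_eq_true, if_false, if_true]
        rw [Finset.sum_const_zero, ← Finset.mul_sum, hc₂c, zero_add]
        have key : lam3 * A m = E m := by
          rw [hlam3]
          field_simp
        rw [hy]
        linear_combination (L (m+1) (Fin.tail y')) * key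
      · -- y' 0 = true
        have hy : lev w (m+1) y' = u * L m (Fin.tail y') := by
          conv_lhs => rw [← Fin.cons_self_tail y', hb]
          rw [g3]
        simp only [hb, Fin.cons_zero, Fin.tail_cons, Bool.false_eq_true, if_false, if_true]
        rw [← Finset.mul_sum, hc₁c, ← Finset.mul_sum,
          Finset.sum_ite_eq' Finset.univ (Fin.tail y') (fun x => L m x),
          if_pos (Finset.mem_univ _)]
        have key : lam1 * Ap + lam2 = u * E m := by
          rw [hlam1, hlam2]
          field_simp
          ring
        rw [hy]
        linear_combination (L m (Fin.tail y')) * key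
    · -- support
      intro x' y' h
      dsimp only at h
      have hle : Fin.tail x' ≤ Fin.tail y' ∧ x' 0 ≤ y' 0 := by
        rcases hbx : x' 0 with _ | _ <;> rcases hby : y' 0 with _ | _ <;>
          simp only [hbx, hby, Bool.false_eq_true, if_false, if_true] at h ⊢
        · -- false false
          have h2 : c₂ (Fin.tail x') (Fin.tail y') ≠ 0 := right_ne_zero_of_mul h
          exact ⟨hc₂s _ _ h2, le_rfl⟩
        · -- false true
          by_cases hc : Fin.tail x' = Fin.tail y'
          · exact ⟨hc ▸ le_rfl, Bool.false_le true⟩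
          · rw [if_neg hc, mul_zero] at h
            exact absurd rfl h
        · -- true false
          exact absurd rfl h
        · -- true true
          have h2 : c₁ (Fin.tail x') (Fin.tail y') ≠ 0 := right_ne_zero_of_mul h
          exact ⟨hc₁s _ _ h2, le_rfl⟩
      intro i
      induction i using Fin.cases with
      | zero => exact hle.2
      | succ j => exact hle.1 j

end S4

-- chunk 3: composition and chain
namespace S4
variable {n : ℕ}

/-- couplings compose -/
lemma coupling_trans {μ ρ ν : (Fin n → Bool) → ℝ}
    (h1 : ∃ c : (Fin n → Bool) → (Fin n → Bool) → ℝ,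
      (∀ x y, 0 ≤ c x y) ∧ (∀ x, ∑ y : Fin n → Bool, c x y = μ x) ∧
      (∀ y, ∑ x : Fin n → Bool, c x y = ρ y) ∧ (∀ x y, c x y ≠ 0 → x ≤ y))
    (h2 : ∃ c : (Fin n → Bool) → (Fin n → Bool) → ℝ,
      (∀ x y, 0 ≤ c x y) ∧ (∀ x, ∑ y : Fin n → Bool, c x y = ρ x) ∧
      (∀ y, ∑ x : Fin n → Bool, c x y = ν y) ∧ (∀ x y, c x y ≠ 0 → x ≤ y)) :
    ∃ c : (Fin n → Bool) → (Fin n → Bool) → ℝ,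
      (∀ x y, 0 ≤ c x y) ∧ (∀ x, ∑ y : Fin n → Bool, c x y = μ x) ∧
      (∀ y, ∑ x : Fin n → Bool, c x y = ν y) ∧ (∀ x y, c x y ≠ 0 → x ≤ y) := by
  obtain ⟨c1, h10, h1r, h1c, h1s⟩ := h1
  obtain ⟨c2, h20, h2r, h2c, h2s⟩ := h2
  have hρ : ∀ y, 0 ≤ ρ y := by
    intro y; rw [← h1c y]; exact Finset.sum_nonneg fun x _ => h10 x y
  have hz1 : ∀ x y, ρ y = 0 → c1 x y = 0 := by
    intro x y hy
    have : ∑ x : Fin n → Bool, c1 x y = 0 := by rw [h1c, hy]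
    exact (Finset.sum_eq_zero_iff_of_nonneg (fun x _ => h10 x y)).1 this x (Finset.mem_univ x)
  have hz2 : ∀ y z, ρ y = 0 → c2 y z = 0 := by
    intro y z hy
    have : ∑ z : Fin n → Bool, c2 y z = 0 := by rw [h2r, hy]
    exact (Finset.sum_eq_zero_iff_of_nonneg (fun z _ => h20 y z)).1 this z (Finset.mem_univ z)
  refine ⟨fun x z => ∑ y : Fin n → Bool, if ρ y = 0 then 0 else c1 x y * c2 y z / ρ y,
    ?_, ?_, ?_, ?_⟩
  · intro x z
    apply Finset.sum_nonneg; intro y _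
    split
    · exact le_rfl
    · exact div_nonneg (mul_nonneg (h10 x y) (h20 y z)) (hρ y)
  · intro x
    rw [Finset.sum_comm]
    rw [← h1r x]
    apply Finset.sum_congr rfl
    intro y _
    by_cases hy : ρ y = 0
    · simp [hy, hz1 x y hy]
    · simp only [if_neg hy]
      rw [← Finset.sum_div, ← Finset.mul_sum, h2r, mul_div_assoc, div_self hy, mul_one]
  · intro z
    rw [Finset.sum_comm]
    rw [← h2c z]
    apply Finset.sum_congr rfl
    intro y _
    by_cases hy : ρ y = 0
    · simp [hy, hz2 y z hy]
    · simp only [if_neg hy]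
      have : ∀ x, c1 x y * c2 y z / ρ y = c2 y z / ρ y * c1 x y := by intro x; ring
      simp only [this]
      rw [← Finset.mul_sum, h1c]
      field_simp
  · intro x z h
    have : ∃ y ∈ Finset.univ, ¬ (if ρ y = 0 then 0 else c1 x y * c2 y z / ρ y) = 0 := by
      by_contra hcon
      push_neg at hcon
      exact h (Finset.sum_eq_zero (fun y hy => not_not.mp (not_not.mpr (hcon y hy))))
    obtain ⟨y, _, hy⟩ := this
    by_cases h0 : ρ y = 0
    · rw [if_pos h0] at hy; exact absurd rfl hy
    · rw [if_neg h0] at hy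
      have hne : c1 x y * c2 y z ≠ 0 := by
        intro hc; rw [hc, zero_div] at hy; exact absurd rfl hy
      exact le_trans (h1s x y (left_ne_zero_of_mul hne)) (h2s y z (right_ne_zero_of_mul hne))

/-- normalized level measure -/
def nul (n : ℕ) (w : Fin n → ℝ) (m : ℕ) (x : Fin n → Bool) : ℝ := lev w m x / Es n w m

lemma nul_nonneg {w : Fin n → ℝ} (hw : ∀ i, 0 < w i) (m : ℕ) (x : Fin n → Bool) :
    0 ≤ nul n w m x := div_nonneg (lev_nonneg hw m x) (Es_nonneg hw m)

/-- chain of couplings between levels i ≤ j ≤ n -/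
lemma nulDom {w : Fin n → ℝ} (hw : ∀ i, 0 < w i) :
    ∀ i j : ℕ, i ≤ j → j ≤ n →
    ∃ c : (Fin n → Bool) → (Fin n → Bool) → ℝ,
      (∀ x y, 0 ≤ c x y) ∧ (∀ x, ∑ y : Fin n → Bool, c x y = nul n w i x) ∧
      (∀ y, ∑ x : Fin n → Bool, c x y = nul n w j y) ∧ (∀ x y, c x y ≠ 0 → x ≤ y) := by
  intro i j hij
  induction j, hij using Nat.le_induction with
  | base =>
    intro _
    refine ⟨fun x y => if x = y then nul n w i x else 0, ?_, ?_, ?_, ?_⟩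
    · intro x y; dsimp only; split
      · exact nul_nonneg hw i x
      · exact le_rfl
    · intro x
      rw [Finset.sum_ite_eq Finset.univ x (fun _ => nul n w i x), if_pos (Finset.mem_univ _)]
    · intro y
      rw [Finset.sum_ite_eq' Finset.univ y (fun x => nul n w i x), if_pos (Finset.mem_univ _)]
    · intro x y h
      dsimp only at h
      by_cases hc : x = y
      · exact hc ▸ le_rfl
      · rw [if_neg hc] at h; exact absurd rfl h
  | succ j hij ihp =>
    intro hjn
    have hjn' : j ≤ n := by omega
    have adj : ∃ c : (Fin n → Bool) → (Fin n → Bool) → ℝ,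
        (∀ x y, 0 ≤ c x y) ∧ (∀ x, ∑ y : Fin n → Bool, c x y = nul n w j x) ∧
        (∀ y, ∑ x : Fin n → Bool, c x y = nul n w (j+1) y) ∧ (∀ x y, c x y ≠ 0 → x ≤ y) := by
      obtain ⟨c, h0, hr, hc, hs⟩ := levDom n w hw j
      have pj : 0 < Es n w j := Es_pos n w hw j hjn'
      have pj1 : 0 < Es n w (j+1) := Es_pos n w hw (j+1) hjn
      refine ⟨fun x y => c x y / (Es n w j * Es n w (j+1)), ?_, ?_, ?_, ?_⟩
      · intro x y; exact div_nonneg (h0 x y) (mul_nonneg pj.le pj1.le)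
      · intro x
        rw [← Finset.sum_div, hr]
        unfold nul
        field_simp
      · intro y
        rw [← Finset.sum_div, hc]
        unfold nul
        field_simp
      · intro x y h
        dsimp only at h
        apply hs x y
        intro hc0
        rw [hc0, zero_div] at h
        exact absurd rfl h
    exact coupling_trans (ihp hjn') adj

end S4

namespace S4

lemma clamp_diff (lo hi x y : ℝ) (hlh : lo ≤ hi) (hxy : x ≤ y) :
    max lo (min hi y) - max lo (min hi x) = max 0 (min hi y - max lo x) := by
  simp only [max_def, min_def]
  split_ifs <;> linarith

lemma quantile (N : ℕ) (a b : ℕ → ℝ) (ha : ∀ i, 0 ≤ a i) (hb : ∀ j, 0 ≤ b j)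
    (htot : ∑ m ∈ Finset.range N, a m = ∑ m ∈ Finset.range N, b m)
    (hpart : ∀ t, ∑ m ∈ Finset.range t, b m ≤ ∑ m ∈ Finset.range t, a m) :
    ∃ d : ℕ → ℕ → ℝ, (∀ i j, 0 ≤ d i j) ∧
      (∀ i, i < N → ∑ j ∈ Finset.range N, d i j = a i) ∧
      (∀ j, j < N → ∑ i ∈ Finset.range N, d i j = b j) ∧
      (∀ i j, d i j ≠ 0 → i ≤ j) := by
  set A : ℕ → ℝ := fun t => ∑ m ∈ Finset.range t, a m with hA
  set B : ℕ → ℝ := fun t => ∑ m ∈ Finset.range t, b m with hB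
  have hAnn : ∀ t, 0 ≤ A t := fun t => Finset.sum_nonneg fun m _ => ha m
  have hBnn : ∀ t, 0 ≤ B t := fun t => Finset.sum_nonneg fun m _ => hb m
  have hAmono : ∀ s t, s ≤ t → A s ≤ A t := by
    intro s t hst
    apply Finset.sum_le_sum_of_subset_of_nonneg (Finset.range_subset_range.mpr hst)
    intro m _ _; exact ha m
  have hBmono : ∀ s t, s ≤ t → B s ≤ B t := by
    intro s t hst
    apply Finset.sum_le_sum_of_subset_of_nonneg (Finset.range_subset_range.mpr hst)
    intro m _ _; exact hb m
  have hAsucc : ∀ t, A (t+1) = A t + a t := fun t => Finset.sum_range_succ a t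
  have hBsucc : ∀ t, B (t+1) = B t + b t := fun t => Finset.sum_range_succ b t
  have hA0 : A 0 = 0 := by simp [hA]
  have hB0 : B 0 = 0 := by simp [hB]
  have hBA : ∀ t, B t ≤ A t := hpart
  have hNN : A N = B N := htot
  refine ⟨fun i j => max 0 (min (A (i+1)) (B (j+1)) - max (A i) (B j)), ?_, ?_, ?_, ?_⟩
  · intro i j; exact le_max_left 0 _
  · intro i hi
    have key : ∀ j, max 0 (min (A (i+1)) (B (j+1)) - max (A i) (B j))
        = max (A i) (min (A (i+1)) (B (j+1))) - max (A i) (min (A (i+1)) (B j)) := by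
      intro j
      rw [clamp_diff (A i) (A (i+1)) (B j) (B (j+1))
        (hAmono i (i+1) (by omega)) (hBmono j (j+1) (by omega))]
    simp only [key]
    rw [Finset.sum_range_sub (fun j => max (A i) (min (A (i+1)) (B j)))]
    rw [hB0, min_eq_right (hAnn (i+1)), max_eq_left (hAnn i), ← hNN,
      min_eq_left (hAmono (i+1) N (by omega)),
      max_eq_right (hAmono i (i+1) (by omega)), hAsucc]
    ring
  · intro j hj
    have key : ∀ i, max 0 (min (A (i+1)) (B (j+1)) - max (A i) (B j))
        = max (B j) (min (B (j+1)) (A (i+1))) - max (B j) (min (B (j+1)) (A i)) := by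
      intro i
      rw [clamp_diff (B j) (B (j+1)) (A i) (A (i+1))
        (hBmono j (j+1) (by omega)) (hAmono i (i+1) (by omega))]
      rw [min_comm, max_comm (A i) (B j)]
    simp only [key]
    rw [Finset.sum_range_sub (fun i => max (B j) (min (B (j+1)) (A i)))]
    rw [hA0, min_eq_right (hBnn (j+1)), max_eq_left (hBnn j), hNN,
      min_eq_left (hBmono (j+1) N (by omega)),
      max_eq_right (hBmono j (j+1) (by omega)), hBsucc]
    ring
  · intro i j hd
    by_contra hij
    push_neg at hij
    apply hd
    have h1 : B (j+1) ≤ A (j+1) := hBA (j+1)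
    have h2 : A (j+1) ≤ A i := hAmono (j+1) i (by omega)
    have h3 : min (A (i+1)) (B (j+1)) ≤ B (j+1) := min_le_right _ _
    have h4 : A i ≤ max (A i) (B j) := le_max_left _ _
    apply max_eq_left
    linarith

end S4

namespace S4
variable {n : ℕ}

lemma prod_pow_cnt (β : ℝ) (x : Fin n → Bool) :
    (∏ i, (if x i then β else 1)) = β ^ cnt x := by
  unfold cnt
  rw [← Finset.prod_pow_eq_pow_sum]
  apply Finset.prod_congr rfl
  intro i _
  by_cases hxi : x i <;> simp [hxi]

lemma key_sum (w : Fin n → ℝ) (β : ℝ) (k : ℕ) :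
    ∑ m ∈ Finset.range (n+1), (if k ≤ m then β^m * Es n w m else 0)
      = ∑ x : Fin n → Bool, (if k ≤ cnt x then β^(cnt x) * wv w x else 0) := by
  have step1 : ∀ m, (if k ≤ m then β^m * Es n w m else 0)
      = ∑ x : Fin n → Bool, (if k ≤ m then β^m * lev w m x else 0) := by
    intro m
    split
    · unfold Es; rw [Finset.mul_sum]
    · rw [Finset.sum_const_zero]
  simp only [step1]
  rw [Finset.sum_comm]
  apply Finset.sum_congr rfl
  intro x _
  have step2 : ∀ m, (if k ≤ m then β^m * lev w m x else 0)
      = if cnt x = m then (if k ≤ m then β^m * wv w x else 0) else 0 := by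
    intro m
    unfold lev
    by_cases h1 : k ≤ m <;> by_cases h2 : cnt x = m <;> simp [h1, h2]
  simp only [step2]
  rw [Finset.sum_ite_eq (Finset.range (n+1)) (cnt x)
    (fun m => if k ≤ m then β^m * wv w x else 0),
    if_pos (Finset.mem_range.mpr (by have := cnt_le x; omega))]
end S4


open S4

/-- if all `β i = (p i/(1-p i))·((1-q i)/q i)` are equal, then for every
`k ≤ n` the conditional law of `X` given `∑ X_i ≥ k` is stochastically dominated by
the conditional law of `Y` given `∑ Y_i ≥ k`. -/
theorem stmt4 {n : ℕ} (p q : Fin n → ℝ)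
    (hpq : ∀ i, 0 < p i ∧ p i ≤ q i ∧ q i < 1)
    (hβ : ∀ i j : Fin n,
      p i / (1 - p i) * ((1 - q i) / q i) = p j / (1 - p j) * ((1 - q j) / q j))
    (k : ℕ) (hk : k ≤ n) :
    dominates (condPMF p (fun x => k ≤ cnt x)) (condPMF q (fun x => k ≤ cnt x)) := by
  classical
  have hp0 : ∀ i, 0 < p i := fun i => (hpq i).1
  have hpq' : ∀ i, p i ≤ q i := fun i => (hpq i).2.1
  have hq1 : ∀ i, q i < 1 := fun i => (hpq i).2.2
  have hq0 : ∀ i, 0 < q i := fun i => lt_of_lt_of_le (hp0 i) (hpq' i)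
  have hp1 : ∀ i, p i < 1 := fun i => lt_of_le_of_lt (hpq' i) (hq1 i)
  set w : Fin n → ℝ := fun i => q i / (1 - q i) with hw_def
  have hw : ∀ i, 0 < w i := fun i => div_pos (hq0 i) (by linarith [hq1 i])
  obtain ⟨β, hβpos, hβle, hβw⟩ : ∃ β : ℝ, 0 < β ∧ β ≤ 1 ∧ ∀ i, p i / (1 - p i) = β * w i := by
    rcases Nat.eq_zero_or_pos n with h0 | hpos
    · subst h0
      exact ⟨1, one_pos, le_rfl, fun i => i.elim0⟩
    · refine ⟨p ⟨0, hpos⟩ / (1 - p ⟨0, hpos⟩) * ((1 - q ⟨0, hpos⟩) / q ⟨0, hpos⟩), ?_, ?_, ?_⟩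
      · exact mul_pos (div_pos (hp0 _) (by linarith [hp1 ⟨0, hpos⟩]))
          (div_pos (by linarith [hq1 ⟨0, hpos⟩]) (hq0 _))
      · rw [div_mul_div_comm, div_le_one (by nlinarith [hp1 ⟨0, hpos⟩, hq0 ⟨0, hpos⟩])]
        nlinarith [hpq' ⟨0, hpos⟩, hp0 ⟨0, hpos⟩, hq1 ⟨0, hpos⟩, hq0 ⟨0, hpos⟩]
      · intro i
        have h := hβ i ⟨0, hpos⟩
        rw [← h, hw_def]
        have h1 : q i ≠ 0 := ne_of_gt (hq0 i)
        have h2 : (1:ℝ) - q i ≠ 0 := by have := hq1 i; intro hc; linarith [sub_eq_zero.mp hc]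
        have h3 : (1:ℝ) - p i ≠ 0 := by have := hp1 i; intro hc; linarith [sub_eq_zero.mp hc]
        field_simp
  -- product decompositions
  have hbwp : ∀ x : Fin n → Bool, bw p x = (∏ i, (1 - p i)) * (β ^ cnt x * wv w x) := by
    intro x
    have hterm : ∀ i, (if x i then p i else 1 - p i)
        = (1 - p i) * ((if x i then β else 1) * (if x i then w i else 1)) := by
      intro i
      have hp1i : (1:ℝ) - p i ≠ 0 := by have := hp1 i; intro hc; linarith [sub_eq_zero.mp hc]
      by_cases hxi : x i
      · simp only [hxi, if_true]
        have := hβw i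
        field_simp at this ⊢
        linarith [this]
      · simp [hxi]
    unfold bw wv
    calc (∏ i, (if x i then p i else 1 - p i))
        = ∏ i, ((1 - p i) * ((if x i then β else 1) * (if x i then w i else 1))) :=
          Finset.prod_congr rfl (fun i _ => hterm i)
      _ = (∏ i, (1 - p i)) * ((∏ i, (if x i then β else 1)) * ∏ i, (if x i then w i else 1)) := by
          rw [Finset.prod_mul_distrib, Finset.prod_mul_distrib]
      _ = (∏ i, (1 - p i)) * (β ^ cnt x * ∏ i, (if x i then w i else 1)) := by
          rw [prod_pow_cnt]
  have hbwq : ∀ x : Fin n → Bool, bw q x = (∏ i, (1 - q i)) * ((1:ℝ) ^ cnt x * wv w x) := by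
    intro x
    have hterm : ∀ i, (if x i then q i else 1 - q i)
        = (1 - q i) * ((if x i then (1:ℝ) else 1) * (if x i then w i else 1)) := by
      intro i
      have hq1i : (1:ℝ) - q i ≠ 0 := by have := hq1 i; intro hc; linarith [sub_eq_zero.mp hc]
      by_cases hxi : x i
      · simp only [hxi, if_true, one_mul]
        rw [hw_def]
        field_simp
      · simp [hxi]
    unfold bw wv
    calc (∏ i, (if x i then q i else 1 - q i))
        = ∏ i, ((1 - q i) * ((if x i then (1:ℝ) else 1) * (if x i then w i else 1))) :=
          Finset.prod_congr rfl (fun i _ => hterm i)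
      _ = (∏ i, (1 - q i)) * ((∏ i, (if x i then (1:ℝ) else 1)) * ∏ i, (if x i then w i else 1)) := by
          rw [Finset.prod_mul_distrib, Finset.prod_mul_distrib]
      _ = (∏ i, (1 - q i)) * ((1:ℝ) ^ cnt x * ∏ i, (if x i then w i else 1)) := by
          rw [prod_pow_cnt]
  have hCp : 0 < ∏ i, (1 - p i) :=
    Finset.prod_pos (fun i _ => by linarith [hp1 i])
  have hCq : 0 < ∏ i, (1 - q i) :=
    Finset.prod_pos (fun i _ => by linarith [hq1 i])
  -- the tilted sums
  set Sp : ℝ := ∑ m ∈ Finset.range (n+1), (if k ≤ m then β^m * Es n w m else 0) with hSp_def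
  set Sq : ℝ := ∑ m ∈ Finset.range (n+1), (if k ≤ m then (1:ℝ)^m * Es n w m else 0) with hSq_def
  have hSpnn : ∀ m ∈ Finset.range (n+1), 0 ≤ (if k ≤ m then β^m * Es n w m else 0) := by
    intro m _; split
    · exact mul_nonneg (pow_nonneg hβpos.le m) (Es_nonneg hw m)
    · exact le_rfl
  have hSqnn : ∀ m ∈ Finset.range (n+1), 0 ≤ (if k ≤ m then (1:ℝ)^m * Es n w m else 0) := by
    intro m _; split
    · exact mul_nonneg (pow_nonneg one_pos.le m) (Es_nonneg hw m)
    · exact le_rfl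
  have hSppos : 0 < Sp := by
    have hmem : k ∈ Finset.range (n+1) := Finset.mem_range.mpr (by omega)
    have := Finset.single_le_sum hSpnn hmem
    have hterm : (0:ℝ) < (if k ≤ k then β^k * Es n w k else 0) := by
      rw [if_pos le_rfl]
      exact mul_pos (pow_pos hβpos k) (Es_pos n w hw k hk)
    rw [hSp_def]; linarith
  have hSqpos : 0 < Sq := by
    have hmem : k ∈ Finset.range (n+1) := Finset.mem_range.mpr (by omega)
    have := Finset.single_le_sum hSqnn hmem
    have hterm : (0:ℝ) < (if k ≤ k then (1:ℝ)^k * Es n w k else 0) := by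
      rw [if_pos le_rfl]
      exact mul_pos (pow_pos one_pos k) (Es_pos n w hw k hk)
    rw [hSq_def]; linarith
  -- conditional pmf formulas
  have hbprp : bpr p (fun x => k ≤ cnt x) = (∏ i, (1 - p i)) * Sp := by
    rw [hSp_def, key_sum w β k]
    unfold bpr
    rw [Finset.mul_sum]
    apply Finset.sum_congr rfl
    intro x _
    rw [hbwp x]
    split <;> simp
  have hbprq : bpr q (fun x => k ≤ cnt x) = (∏ i, (1 - q i)) * Sq := by
    rw [hSq_def, key_sum w (1:ℝ) k]
    unfold bpr
    rw [Finset.mul_sum]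
    apply Finset.sum_congr rfl
    intro x _
    rw [hbwq x]
    split <;> simp
  have hcondp : ∀ x, condPMF p (fun x => k ≤ cnt x) x
      = (if k ≤ cnt x then β^(cnt x) * wv w x else 0) / Sp := by
    intro x
    unfold condPMF
    rw [hbprp]
    split_ifs with h
    · rw [hbwp x, mul_div_mul_left _ _ (ne_of_gt hCp)]
    · simp
  have hcondq : ∀ x, condPMF q (fun x => k ≤ cnt x) x
      = (if k ≤ cnt x then (1:ℝ)^(cnt x) * wv w x else 0) / Sq := by
    intro x
    unfold condPMF
    rw [hbprq]
    split_ifs with h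
    · rw [hbwq x, mul_div_mul_left _ _ (ne_of_gt hCq)]
    · simp
  -- count distributions
  set a : ℕ → ℝ := fun m => (if k ≤ m ∧ m ≤ n then β^m * Es n w m else 0) / Sp with ha_def
  set b : ℕ → ℝ := fun m => (if k ≤ m ∧ m ≤ n then (1:ℝ)^m * Es n w m else 0) / Sq with hb_def
  have hbridgep : ∑ m ∈ Finset.range (n+1), (if k ≤ m ∧ m ≤ n then β^m * Es n w m else 0)
      = Sp := by
    rw [hSp_def]
    apply Finset.sum_congr rfl
    intro m hm
    have hmn : m ≤ n := by have := Finset.mem_range.mp hm; omega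
    by_cases h : k ≤ m <;> simp [h, hmn]
  have hbridgeq : ∑ m ∈ Finset.range (n+1), (if k ≤ m ∧ m ≤ n then (1:ℝ)^m * Es n w m else 0)
      = Sq := by
    rw [hSq_def]
    apply Finset.sum_congr rfl
    intro m hm
    have hmn : m ≤ n := by have := Finset.mem_range.mp hm; omega
    by_cases h : k ≤ m <;> simp [h, hmn]
  have hann : ∀ m, 0 ≤ a m := by
    intro m
    rw [ha_def]
    apply div_nonneg _ hSppos.le
    split
    · exact mul_nonneg (pow_nonneg hβpos.le m) (Es_nonneg hw m)
    · exact le_rfl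
  have hbnn : ∀ m, 0 ≤ b m := by
    intro m
    rw [hb_def]
    apply div_nonneg _ hSqpos.le
    split
    · exact mul_nonneg (pow_nonneg one_pos.le m) (Es_nonneg hw m)
    · exact le_rfl
  have hatot : ∑ m ∈ Finset.range (n+1), a m = 1 := by
    rw [ha_def, ← Finset.sum_div, hbridgep, div_self (ne_of_gt hSppos)]
  have hbtot : ∑ m ∈ Finset.range (n+1), b m = 1 := by
    rw [hb_def, ← Finset.sum_div, hbridgeq, div_self (ne_of_gt hSqpos)]
  have hazero : ∀ m, n < m → a m = 0 := by
    intro m hm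
    rw [ha_def]
    simp only [show ¬(k ≤ m ∧ m ≤ n) from by omega, if_false, zero_div]
  have hbzero : ∀ m, n < m → b m = 0 := by
    intro m hm
    rw [hb_def]
    simp only [show ¬(k ≤ m ∧ m ≤ n) from by omega, if_false, zero_div]
  have hpart : ∀ t, ∑ m ∈ Finset.range t, b m ≤ ∑ m ∈ Finset.range t, a m := by
    intro t
    by_cases ht : t ≤ n + 1
    · have hsa : ∑ m ∈ Finset.range t, a m
          = (∑ m ∈ Finset.range t, (if k ≤ m ∧ m ≤ n then β^m * Es n w m else 0)) / Sp := by
        rw [ha_def, ← Finset.sum_div]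
      have hsb : ∑ m ∈ Finset.range t, b m
          = (∑ m ∈ Finset.range t, (if k ≤ m ∧ m ≤ n then (1:ℝ)^m * Es n w m else 0)) / Sq := by
        rw [hb_def, ← Finset.sum_div]
      rw [hsa, hsb, div_le_div_iff₀ hSqpos hSppos, ← hbridgep, ← hbridgeq,
        ← Finset.sum_range_add_sum_Ico (fun m => if k ≤ m ∧ m ≤ n then β^m * Es n w m else 0) ht,
        ← Finset.sum_range_add_sum_Ico (fun m => if k ≤ m ∧ m ≤ n then (1:ℝ)^m * Es n w m else 0) ht]
      have key : (∑ m ∈ Finset.range t, (if k ≤ m ∧ m ≤ n then (1:ℝ)^m * Es n w m else 0)) *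
            (∑ l ∈ Finset.Ico t (n+1), (if k ≤ l ∧ l ≤ n then β^l * Es n w l else 0))
          ≤ (∑ m ∈ Finset.range t, (if k ≤ m ∧ m ≤ n then β^m * Es n w m else 0)) *
            (∑ l ∈ Finset.Ico t (n+1), (if k ≤ l ∧ l ≤ n then (1:ℝ)^l * Es n w l else 0)) := by
        rw [Finset.sum_mul_sum, Finset.sum_mul_sum]
        apply Finset.sum_le_sum
        intro m hm
        apply Finset.sum_le_sum
        intro l hl
        have hml : m ≤ l := by
          have h1 := Finset.mem_range.mp hm
          have h2 := (Finset.mem_Ico.mp hl).1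
          omega
        split_ifs with h1 h2 h2
        · simp only [one_pow]
          have hle : β^l ≤ β^m := pow_le_pow_of_le_one hβpos.le hβle hml
          have h3 := mul_le_mul_of_nonneg_right
            (mul_le_mul_of_nonneg_left hle (Es_nonneg hw m)) (Es_nonneg hw l)
          nlinarith [h3]
        · simp
        · simp
        · simp
      nlinarith [key]
    · push_neg at ht
      have hea : ∑ m ∈ Finset.range t, a m = ∑ m ∈ Finset.range (n+1), a m := by
        symm
        apply Finset.sum_subset (Finset.range_subset_range.mpr (by omega))
        intro m _ hm
        have : ¬ m < n + 1 := fun hc => hm (Finset.mem_range.mpr hc)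
        exact hazero m (by omega)
      have heb : ∑ m ∈ Finset.range t, b m = ∑ m ∈ Finset.range (n+1), b m := by
        symm
        apply Finset.sum_subset (Finset.range_subset_range.mpr (by omega))
        intro m _ hm
        have : ¬ m < n + 1 := fun hc => hm (Finset.mem_range.mpr hc)
        exact hbzero m (by omega)
      rw [hea, heb, hatot, hbtot]
  -- quantile coupling of the count distributions
  obtain ⟨d, hd0, hdr, hdc, hds⟩ := quantile (n+1) a b hann hbnn
    (by rw [hatot, hbtot]) hpart
  -- level couplings
  have hcoup : ∀ i j : ℕ, ∃ c : (Fin n → Bool) → (Fin n → Bool) → ℝ,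
      (∀ x y, 0 ≤ c x y) ∧ (∀ x y, c x y ≠ 0 → x ≤ y) ∧
      (i ≤ j → j ≤ n →
        ((∀ x, ∑ y : Fin n → Bool, c x y = nul n w i x) ∧
         (∀ y, ∑ x : Fin n → Bool, c x y = nul n w j y))) := by
    intro i j
    by_cases h : i ≤ j ∧ j ≤ n
    · obtain ⟨c, h0, hr, hc, hs⟩ := nulDom hw i j h.1 h.2
      exact ⟨c, h0, hs, fun _ _ => ⟨hr, hc⟩⟩
    · exact ⟨fun _ _ => 0, fun _ _ => le_rfl, fun x y h' => absurd rfl h',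
        fun h1 h2 => absurd ⟨h1, h2⟩ h⟩
  choose C hC0 hCs hCm using hcoup
  -- the final coupling
  refine ⟨fun x y => ∑ i ∈ Finset.range (n+1), ∑ j ∈ Finset.range (n+1), d i j * C i j x y,
    ?_, ?_, ?_, ?_⟩
  · intro x y
    apply Finset.sum_nonneg; intro i _
    apply Finset.sum_nonneg; intro j _
    exact mul_nonneg (hd0 i j) (hC0 i j x y)
  · -- rows
    intro x
    rw [hcondp x]
    have swap : ∑ y : Fin n → Bool, ∑ i ∈ Finset.range (n+1), ∑ j ∈ Finset.range (n+1),
          d i j * C i j x y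
        = ∑ i ∈ Finset.range (n+1), ∑ j ∈ Finset.range (n+1),
          d i j * ∑ y : Fin n → Bool, C i j x y := by
      rw [Finset.sum_comm]
      apply Finset.sum_congr rfl
      intro i _
      rw [Finset.sum_comm]
      apply Finset.sum_congr rfl
      intro j _
      rw [Finset.mul_sum]
    rw [swap]
    have step : ∀ i ∈ Finset.range (n+1), ∀ j ∈ Finset.range (n+1),
        d i j * (∑ y : Fin n → Bool, C i j x y) = d i j * nul n w i x := by
      intro i _ j hj
      by_cases hd : d i j = 0
      · rw [hd, zero_mul, zero_mul]
      · have hij : i ≤ j := hds i j hd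
        have hjn : j ≤ n := by have := Finset.mem_range.mp hj; omega
        rw [(hCm i j hij hjn).1 x]
    calc ∑ i ∈ Finset.range (n+1), ∑ j ∈ Finset.range (n+1),
          d i j * ∑ y : Fin n → Bool, C i j x y
        = ∑ i ∈ Finset.range (n+1), ∑ j ∈ Finset.range (n+1), d i j * nul n w i x := by
          apply Finset.sum_congr rfl; intro i hi
          apply Finset.sum_congr rfl; intro j hj
          exact step i hi j hj
      _ = ∑ i ∈ Finset.range (n+1), a i * nul n w i x := by
          apply Finset.sum_congr rfl; intro i hi
          rw [← Finset.sum_mul, hdr i (Finset.mem_range.mp hi)]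
      _ = (if k ≤ cnt x then β ^ cnt x * wv w x else 0) / Sp := by
          have hterm : ∀ i ∈ Finset.range (n+1), a i * nul n w i x
              = if cnt x = i then
                  ((if k ≤ i ∧ i ≤ n then β^i * Es n w i else 0) * wv w x / (Sp * Es n w i))
                else 0 := by
            intro i _
            simp only [ha_def, nul, lev]
            split_ifs <;> first | ring | simp
          rw [Finset.sum_congr rfl hterm,
            Finset.sum_ite_eq (Finset.range (n+1)) (cnt x) _,
            if_pos (Finset.mem_range.mpr (by have := cnt_le x; omega))]
          have hcn : cnt x ≤ n := cnt_le x
          by_cases h : k ≤ cnt x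
          · rw [if_pos (⟨h, hcn⟩ : k ≤ cnt x ∧ cnt x ≤ n), if_pos h]
            have hE : Es n w (cnt x) ≠ 0 := ne_of_gt (Es_pos n w hw (cnt x) hcn)
            field_simp
          · rw [if_neg (by tauto), if_neg h]
            simp
  · -- cols
    intro y
    rw [hcondq y]
    have swap : ∑ x : Fin n → Bool, ∑ i ∈ Finset.range (n+1), ∑ j ∈ Finset.range (n+1),
          d i j * C i j x y
        = ∑ j ∈ Finset.range (n+1), ∑ i ∈ Finset.range (n+1),
          d i j * ∑ x : Fin n → Bool, C i j x y := by
      rw [Finset.sum_comm]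
      have h1 : ∀ i ∈ Finset.range (n+1),
          (∑ x : Fin n → Bool, ∑ j ∈ Finset.range (n+1), d i j * C i j x y)
            = ∑ j ∈ Finset.range (n+1), d i j * ∑ x : Fin n → Bool, C i j x y := by
        intro i _
        rw [Finset.sum_comm]
        apply Finset.sum_congr rfl
        intro j _
        rw [Finset.mul_sum]
      rw [Finset.sum_congr rfl h1, Finset.sum_comm]
    rw [swap]
    have step : ∀ j ∈ Finset.range (n+1), ∀ i ∈ Finset.range (n+1),
        d i j * (∑ x : Fin n → Bool, C i j x y) = d i j * nul n w j y := by
      intro j hj i _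
      by_cases hd : d i j = 0
      · rw [hd, zero_mul, zero_mul]
      · have hij : i ≤ j := hds i j hd
        have hjn : j ≤ n := by have := Finset.mem_range.mp hj; omega
        rw [(hCm i j hij hjn).2 y]
    calc ∑ j ∈ Finset.range (n+1), ∑ i ∈ Finset.range (n+1),
          d i j * ∑ x : Fin n → Bool, C i j x y
        = ∑ j ∈ Finset.range (n+1), ∑ i ∈ Finset.range (n+1), d i j * nul n w j y := by
          apply Finset.sum_congr rfl; intro j hj
          apply Finset.sum_congr rfl; intro i hi
          exact step j hj i hi
      _ = ∑ j ∈ Finset.range (n+1), b j * nul n w j y := by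
          apply Finset.sum_congr rfl; intro j hj
          rw [← Finset.sum_mul, hdc j (Finset.mem_range.mp hj)]
      _ = (if k ≤ cnt y then (1:ℝ) ^ cnt y * wv w y else 0) / Sq := by
          have hterm : ∀ j ∈ Finset.range (n+1), b j * nul n w j y
              = if cnt y = j then
                  ((if k ≤ j ∧ j ≤ n then (1:ℝ)^j * Es n w j else 0) * wv w y / (Sq * Es n w j))
                else 0 := by
            intro j _
            simp only [hb_def, nul, lev]
            split_ifs <;> first | ring | simp
          rw [Finset.sum_congr rfl hterm,
            Finset.sum_ite_eq (Finset.range (n+1)) (cnt y) _,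
            if_pos (Finset.mem_range.mpr (by have := cnt_le y; omega))]
          have hcn : cnt y ≤ n := cnt_le y
          by_cases h : k ≤ cnt y
          · rw [if_pos (⟨h, hcn⟩ : k ≤ cnt y ∧ cnt y ≤ n), if_pos h]
            have hE : Es n w (cnt y) ≠ 0 := ne_of_gt (Es_pos n w hw (cnt y) hcn)
            field_simp
          · rw [if_neg (by tauto), if_neg h]
            simp
  · -- support
    intro x y h
    dsimp only at h
    obtain ⟨i, _, hi⟩ := Finset.exists_ne_zero_of_sum_ne_zero h
    obtain ⟨j, _, hj⟩ := Finset.exists_ne_zero_of_sum_ne_zero hi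
    exact hCs i j x y (right_ne_zero_of_mul hj)
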